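/- If a solution (ξ, θ, α) of (*) with values in 𝒟 satisfies, for some t₀ ∈ ℝ, either ξ(t₀) > (g/4)·ln(m) and ξ'(t₀) < 0, or ξ(t₀) < (g/4)·ln(m) and ξ'(t₀) > 0, then there exists a finite time T ∈ (0, ∞) such that ξ(t₀ + T) = (g/4)·ln(m). -/

import Mathlib

/-- The constant `m = m₁ + m₂ + 2/g`. -/
noncomputable def mconst (g m₁ m₂ : ℕ) : ℝ := (m₁ : ℝ) + (m₂ : ℝ) + 2 / (g : ℝ)

/-- The angle `θ* = arctan √(m₁/m₂)`. -/
noncomputable def thetaStar (m₁ m₂ : ℕ) : ℝ :=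
  Real.arctan (Real.sqrt ((m₁ : ℝ) / (m₂ : ℝ)))

/-- `l(θ) = m₁ cos² θ - m₂ sin² θ`. -/
noncomputable def lfun (m₁ m₂ : ℕ) (θ : ℝ) : ℝ :=
  (m₁ : ℝ) * Real.cos θ ^ 2 - (m₂ : ℝ) * Real.sin θ ^ 2

/-- `(ξ, θ, α)` is a (globally defined) solution of the ODE system (*):
`ξ' = cos α · sin 2θ`, `θ' = sin α · sin 2θ`,
`α' = sin α · sin 2θ · (exp((4/g)ξ) - m) + 2 cos α · l(θ)`. -/
def IsSolution (g m₁ m₂ : ℕ) (ξ θ α : ℝ → ℝ) : Prop :=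
  ∀ t : ℝ,
    HasDerivAt ξ (Real.cos (α t) * Real.sin (2 * θ t)) t ∧
    HasDerivAt θ (Real.sin (α t) * Real.sin (2 * θ t)) t ∧
    HasDerivAt α
      (Real.sin (α t) * Real.sin (2 * θ t) *
          (Real.exp (4 / (g : ℝ) * ξ t) - mconst g m₁ m₂) +
        2 * Real.cos (α t) * lfun m₁ m₂ (θ t)) t

lemma hasDerivAt_V (g m₁ m₂ : ℕ) (hm₁ : 0 < m₁) (hm₂ : 0 < m₂)
    (ξ θ α : ℝ → ℝ) (hsol : IsSolution g m₁ m₂ ξ θ α) (ε : ℝ) (t : ℝ) :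
    HasDerivAt
      (fun s => -ε * (Real.cos (α s) * (Real.sin (θ s) ^ m₁ * Real.cos (θ s) ^ m₂)))
      (ε * Real.sin (α t) ^ 2 * Real.sin (2 * θ t) *
        (Real.exp (4 / (g : ℝ) * ξ t) - mconst g m₁ m₂) *
        (Real.sin (θ t) ^ m₁ * Real.cos (θ t) ^ m₂)) t := by
  obtain ⟨k₁, rfl⟩ : ∃ k, m₁ = k + 1 := ⟨m₁ - 1, by omega⟩
  obtain ⟨k₂, rfl⟩ : ∃ k, m₂ = k + 1 := ⟨m₂ - 1, by omega⟩
  obtain ⟨hξ', hθ', hα'⟩ := hsol t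
  have hB := ((hα'.cos).mul ((hθ'.sin.pow (k₁ + 1)).mul (hθ'.cos.pow (k₂ + 1)))).const_mul (-ε)
  refine hB.congr_deriv ?_
  simp only [Nat.add_sub_cancel, lfun, Real.sin_two_mul, Pi.mul_apply, Pi.pow_apply]
  push_cast
  ring

set_option maxHeartbeats 1000000 in
lemma key (g m₁ m₂ : ℕ) (hg : 0 < g) (hm₁ : 0 < m₁) (hm₂ : 0 < m₂)
    (ξ θ α : ℝ → ℝ) (hsol : IsSolution g m₁ m₂ ξ θ α)
    (hD : ∀ t : ℝ, θ t ∈ Set.Ioo 0 (Real.pi / 2)) (t₀ : ℝ)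
    (ε : ℝ) (hε : ε = 1 ∨ ε = -1)
    (h1 : 0 < ε * (ξ t₀ - (g : ℝ) / 4 * Real.log (mconst g m₁ m₂)))
    (h2 : ε * Real.cos (α t₀) < 0) :
    ∃ T > (0 : ℝ), ξ (t₀ + T) = (g : ℝ) / 4 * Real.log (mconst g m₁ m₂) := by
  set c : ℝ := (g : ℝ) / 4 * Real.log (mconst g m₁ m₂) with hc
  have hgR : (0 : ℝ) < g := by exact_mod_cast hg
  have hm1R : (1 : ℝ) ≤ m₁ := by exact_mod_cast hm₁
  have hm2R : (0 : ℝ) ≤ m₂ := by positivity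
  have hmpos : (0 : ℝ) < mconst g m₁ m₂ := by
    have h2g : (0 : ℝ) < 2 / (g : ℝ) := by positivity
    unfold mconst; linarith
  have hexpc : Real.exp (4 / (g : ℝ) * c) = mconst g m₁ m₂ := by
    rw [hc, show 4 / (g : ℝ) * ((g : ℝ) / 4 * Real.log (mconst g m₁ m₂))
        = Real.log (mconst g m₁ m₂) by field_simp, Real.exp_log hmpos]
  -- basic positivity facts
  have hsinp : ∀ t, 0 < Real.sin (θ t) := fun t =>
    Real.sin_pos_of_pos_of_lt_pi (hD t).1 (lt_trans (hD t).2 (by linarith [Real.pi_pos]))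
  have hcosp : ∀ t, 0 < Real.cos (θ t) :=
    fun t => Real.cos_pos_of_mem_Ioo ⟨by linarith [(hD t).1, Real.pi_pos], (hD t).2⟩
  have hs2 : ∀ t, 0 < Real.sin (2 * θ t) := fun t => by
    rw [Real.sin_two_mul]; have := hsinp t; have := hcosp t; positivity
  have hwpos : ∀ t, 0 < Real.sin (θ t) ^ m₁ * Real.cos (θ t) ^ m₂ := fun t => by
    have := hsinp t; have := hcosp t; positivity
  have hwle1 : ∀ t, Real.sin (θ t) ^ m₁ * Real.cos (θ t) ^ m₂ ≤ 1 := fun t =>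
    mul_le_one₀ (pow_le_one₀ (hsinp t).le (Real.sin_le_one _)) (pow_nonneg (hcosp t).le m₂)
      (pow_le_one₀ (hcosp t).le (Real.cos_le_one _))
  have hcont : Continuous ξ := by
    refine continuous_iff_continuousAt.2 fun t => ((hsol t).1).continuousAt
  by_contra hcon
  push_neg at hcon
  -- the solution stays on the same side of c
  have hside : ∀ t, t₀ ≤ t → 0 < ε * (ξ t - c) := by
    intro t ht
    rcases eq_or_lt_of_le ht with rfl | hlt
    · exact h1
    by_contra hle
    push_neg at hle
    have hmem : c ∈ Set.uIcc (ξ t₀) (ξ t) := by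
      rcases hε with rfl | rfl
      · exact Set.mem_uIcc.mpr (Or.inr ⟨by linarith, by linarith⟩)
      · exact Set.mem_uIcc.mpr (Or.inl ⟨by linarith, by linarith⟩)
    obtain ⟨s, hsmem, hsc⟩ := intermediate_value_uIcc hcont.continuousOn hmem
    rw [Set.uIcc_of_le ht] at hsmem
    have hs0 : t₀ < s := by
      rcases eq_or_lt_of_le hsmem.1 with rfl | h' 
      · exfalso; rw [hsc] at h1; simp at h1
      · exact h'
    have := hcon (s - t₀) (by linarith)
    rw [show t₀ + (s - t₀) = s by ring] at this
    exact this hsc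
  -- monotonicity of V
  have hVd := hasDerivAt_V g m₁ m₂ hm₁ hm₂ ξ θ α hsol ε
  have hEm : ∀ t, t₀ ≤ t → 0 ≤ ε * (Real.exp (4 / (g : ℝ) * ξ t) - mconst g m₁ m₂) := by
    intro t ht
    have h1t := hside t ht
    rcases hε with rfl | rfl
    · have hcle : c ≤ ξ t := by linarith
      have h4g : (0:ℝ) ≤ 4 / (g:ℝ) := by positivity
      have : Real.exp (4 / (g : ℝ) * c) ≤ Real.exp (4 / (g : ℝ) * ξ t) :=
        Real.exp_le_exp.mpr (mul_le_mul_of_nonneg_left hcle h4g)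
      rw [hexpc] at this; linarith
    · have hcle : ξ t ≤ c := by linarith
      have h4g : (0:ℝ) ≤ 4 / (g:ℝ) := by positivity
      have : Real.exp (4 / (g : ℝ) * ξ t) ≤ Real.exp (4 / (g : ℝ) * c) :=
        Real.exp_le_exp.mpr (mul_le_mul_of_nonneg_left hcle h4g)
      rw [hexpc] at this; linarith
  have hmono : MonotoneOn
      (fun s => -ε * (Real.cos (α s) * (Real.sin (θ s) ^ m₁ * Real.cos (θ s) ^ m₂)))
      (Set.Ici t₀) := by
    apply monotoneOn_of_deriv_nonneg (convex_Ici t₀)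
    · exact (continuous_iff_continuousAt.2 fun t => (hVd t).continuousAt).continuousOn
    · intro x hx; exact (hVd x).differentiableAt.differentiableWithinAt
    · intro x hx
      rw [interior_Ici] at hx
      rw [(hVd x).deriv]
      have h1x := hEm x (le_of_lt hx)
      have h2x := sq_nonneg (Real.sin (α x))
      have h3x := (hs2 x).le
      have h4x := (hwpos x).le
      nlinarith [mul_nonneg (mul_nonneg (mul_nonneg h1x h2x) h3x) h4x]
  set v₀ : ℝ := -ε * (Real.cos (α t₀) * (Real.sin (θ t₀) ^ m₁ * Real.cos (θ t₀) ^ m₂))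
    with hv₀def
  have hv₀ : 0 < v₀ := by
    have := mul_neg_of_neg_of_pos h2 (hwpos t₀)
    rw [hv₀def]; nlinarith
  -- derivative bound for t ≥ t₀
  have hslope : ∀ t, t₀ ≤ t → ε * (Real.cos (α t) * Real.sin (2 * θ t)) ≤ -(2 * v₀ ^ 3) := by
    intro t ht
    have hWt : v₀ ≤ -ε * (Real.cos (α t) * (Real.sin (θ t) ^ m₁ * Real.cos (θ t) ^ m₂)) :=
      hmono Set.self_mem_Ici ht ht
    have hApos : 0 < -ε * Real.cos (α t) := by nlinarith [hwpos t]
    have hAle1 : -ε * Real.cos (α t) ≤ 1 := by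
      rcases hε with rfl | rfl <;>
        nlinarith [Real.neg_one_le_cos (α t), Real.cos_le_one (α t)]
    have hAv : v₀ ≤ -ε * Real.cos (α t) := by nlinarith [hwpos t, hwle1 t]
    have hwv : v₀ ≤ Real.sin (θ t) ^ m₁ * Real.cos (θ t) ^ m₂ := by nlinarith
    have hsv : v₀ ≤ Real.sin (θ t) := by
      have h5 : Real.sin (θ t) ^ m₁ * Real.cos (θ t) ^ m₂ ≤ Real.sin (θ t) ^ m₁ := by
        have := pow_le_one₀ (hcosp t).le (Real.cos_le_one (θ t)) (n := m₂)
        nlinarith [pow_nonneg (hsinp t).le m₁]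
      have h6 : Real.sin (θ t) ^ m₁ ≤ Real.sin (θ t) :=
        pow_le_of_le_one (hsinp t).le (Real.sin_le_one _) (by omega)
      linarith
    have hcv : v₀ ≤ Real.cos (θ t) := by
      have h5 : Real.sin (θ t) ^ m₁ * Real.cos (θ t) ^ m₂ ≤ Real.cos (θ t) ^ m₂ := by
        have := pow_le_one₀ (hsinp t).le (Real.sin_le_one (θ t)) (n := m₁)
        nlinarith [pow_nonneg (hcosp t).le m₂]
      have h6 : Real.cos (θ t) ^ m₂ ≤ Real.cos (θ t) :=
        pow_le_of_le_one (hcosp t).le (Real.cos_le_one _) (by omega)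
      linarith
    have hsc : v₀ * v₀ ≤ Real.sin (θ t) * Real.cos (θ t) :=
      mul_le_mul hsv hcv hv₀.le (hsinp t).le
    have hAsc : v₀ * (v₀ * v₀) ≤ (-ε * Real.cos (α t)) * (Real.sin (θ t) * Real.cos (θ t)) :=
      mul_le_mul hAv hsc (mul_nonneg hv₀.le hv₀.le) hApos.le
    rw [Real.sin_two_mul]
    nlinarith [hAsc]
  -- the linear comparison function
  have hud : ∀ t, HasDerivAt (fun s => ε * ξ s + 2 * v₀ ^ 3 * s)
      (ε * (Real.cos (α t) * Real.sin (2 * θ t)) + 2 * v₀ ^ 3 * 1) t := by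
    intro t
    have h1' := ((hsol t).1).const_mul ε
    have h2' := (hasDerivAt_id t).const_mul (2 * v₀ ^ 3)
    exact (h1'.congr_deriv (by ring)).add h2'
  have hanti : AntitoneOn (fun s => ε * ξ s + 2 * v₀ ^ 3 * s) (Set.Ici t₀) := by
    apply antitoneOn_of_deriv_nonpos (convex_Ici t₀)
    · exact (continuous_iff_continuousAt.2 fun t => (hud t).continuousAt).continuousOn
    · intro x hx; exact (hud x).differentiableAt.differentiableWithinAt
    · intro x hx
      rw [interior_Ici] at hx
      rw [(hud x).deriv]
      have := hslope x (le_of_lt hx)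
      nlinarith [hv₀]
  set d : ℝ := ε * (ξ t₀ - c) with hd
  set t₁ : ℝ := t₀ + d / (2 * v₀ ^ 3) + 1 with ht₁def
  have hdpos : 0 < d := h1
  have hvv : (0:ℝ) < 2 * v₀ ^ 3 := mul_pos two_pos (pow_pos hv₀ 3)
  have hdd : 0 < d / (2 * v₀ ^ 3) := div_pos hdpos hvv
  have ht₁ : t₀ ≤ t₁ := by rw [ht₁def]; linarith
  have hu : ε * ξ t₁ + 2 * v₀ ^ 3 * t₁ ≤ ε * ξ t₀ + 2 * v₀ ^ 3 * t₀ :=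
    hanti Set.self_mem_Ici ht₁ ht₁
  have hcancel : 2 * v₀ ^ 3 * (d / (2 * v₀ ^ 3)) = d := by
    rw [mul_comm]
    exact div_mul_cancel₀ d (ne_of_gt hvv)
  have ht₁eq : 2 * v₀ ^ 3 * (t₁ - t₀) = d + 2 * v₀ ^ 3 := by
    rw [ht₁def, show t₀ + d / (2 * v₀ ^ 3) + 1 - t₀ = d / (2 * v₀ ^ 3) + 1 by ring,
      mul_add, hcancel, mul_one]
  have hlast := hside t₁ ht₁
  linarith [hlast, hu, ht₁eq, hvv]

/-- If `ξ'` points towards the line `ξ = (g/4) ln m`, then the solution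
reaches this line in finite time. -/
theorem stmt7 (g m₁ m₂ : ℕ) (hg : g = 1 ∨ g = 2 ∨ g = 3 ∨ g = 4 ∨ g = 6)
    (hm₁ : 0 < m₁) (hm₂ : 0 < m₂)
    (ξ θ α : ℝ → ℝ) (hsol : IsSolution g m₁ m₂ ξ θ α)
    (hD : ∀ t : ℝ, θ t ∈ Set.Ioo 0 (Real.pi / 2)) (t₀ : ℝ)
    (h : (ξ t₀ > (g : ℝ) / 4 * Real.log (mconst g m₁ m₂) ∧
            Real.cos (α t₀) * Real.sin (2 * θ t₀) < 0) ∨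
         (ξ t₀ < (g : ℝ) / 4 * Real.log (mconst g m₁ m₂) ∧
            Real.cos (α t₀) * Real.sin (2 * θ t₀) > 0)) :
    ∃ T > (0 : ℝ), ξ (t₀ + T) = (g : ℝ) / 4 * Real.log (mconst g m₁ m₂) := by
  have hg' : 0 < g := by rcases hg with rfl | rfl | rfl | rfl | rfl <;> norm_num
  have hs2 : 0 < Real.sin (2 * θ t₀) := by
    rw [Real.sin_two_mul]
    have h1 := Real.sin_pos_of_pos_of_lt_pi (hD t₀).1
      (lt_trans (hD t₀).2 (by linarith [Real.pi_pos]))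
    have h2 := Real.cos_pos_of_mem_Ioo
      (show θ t₀ ∈ Set.Ioo (-(Real.pi/2)) (Real.pi/2) from
        ⟨by linarith [(hD t₀).1, Real.pi_pos], (hD t₀).2⟩)
    positivity
  rcases h with ⟨hξ0, hf0⟩ | ⟨hξ0, hf0⟩
  · have hcos : Real.cos (α t₀) < 0 := by nlinarith
    exact key g m₁ m₂ hg' hm₁ hm₂ ξ θ α hsol hD t₀ 1 (Or.inl rfl)
      (by linarith) (by linarith)
  · have hcos : 0 < Real.cos (α t₀) := by nlinarith
    exact key g m₁ m₂ hg' hm₁ hm₂ ξ θ α hsol hD t₀ (-1) (Or.inr rfl)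
      (by linarith) (by linarith)
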